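/- Fix x ∈ B and define D_T = ∑_{t=1}^T ‖x_t − x‖₂² and Λ_T = ∑_{t=1}^T ⟨x − x_t, g̃_t − ∇f(x_t)⟩, where each x_t ∈ B is 𝔉_{t−1}-measurable, g̃_t is 𝔉_t-measurable with E[g̃_t | 𝔉_{t−1}] = ∇f(x_t) and ‖g̃_t‖₂ ≤ G₁, ‖∇f(x_t)‖₂ ≤ G₁ almost surely. Then with m = ⌈2 log₂ T⌉, for any ε ∈ (0,1): ℙ( D_T ≤ 4r²/T ) + ℙ( Λ_T ≤ 4G₁ √(D_T ln(m/ε)) + (4√2/3) G₁ ln(m/ε) ) ≥ 1 − ε. -/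

import Mathlib

open MeasureTheory Filter
open scoped BigOperators ENNReal

lemma chord_bound {l y c : ℝ} (hc : 0 ≤ c) (hy : |y| ≤ c) :
    Real.exp (l * y) ≤ Real.cosh (l * c) +
      (if c = 0 then 0 else Real.sinh (l * c) / c) * y := by
  rcases eq_or_lt_of_le hc with h0 | h0
  · have hy0 : y = 0 := by
      have : |y| = 0 := le_antisymm (hy.trans h0.symm.le) (abs_nonneg y)
      exact abs_eq_zero.mp this
    simp [← h0, hy0]
  · have hy1 : -c ≤ y := neg_le_of_abs_le hy
    have hy2 : y ≤ c := le_of_abs_le hy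
    rw [if_neg h0.ne']
    have ha : (0:ℝ) ≤ (c + y) / (2 * c) := div_nonneg (by linarith) (by linarith)
    have hb : (0:ℝ) ≤ (c - y) / (2 * c) := div_nonneg (by linarith) (by linarith)
    have hab : (c + y) / (2 * c) + (c - y) / (2 * c) = 1 := by field_simp; ring
    have key := convexOn_exp.2 (Set.mem_univ (l * c)) (Set.mem_univ (-(l * c))) ha hb hab
    simp only [smul_eq_mul] at key
    have harg : (c + y) / (2 * c) * (l * c) + (c - y) / (2 * c) * (-(l * c)) = l * y := by
      field_simp; ring
    rw [harg] at key
    refine key.trans (le_of_eq ?_)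
    rw [Real.cosh_eq, Real.sinh_eq]
    field_simp
    ring

lemma coord_abs_le {d : ℕ} (v : EuclideanSpace ℝ (Fin d)) (i : Fin d) : |v i| ≤ ‖v‖ := by
  rw [EuclideanSpace.norm_eq, ← Real.sqrt_sq_eq_abs]
  apply Real.sqrt_le_sqrt
  simp_rw [Real.norm_eq_abs, sq_abs]
  exact Finset.single_le_sum (f := fun j => v j ^ 2) (fun j _ => sq_nonneg _) (Finset.mem_univ i)

lemma condexp_euclidean_apply {Ω : Type*} {m m0 : MeasurableSpace Ω} (hm : m ≤ m0)
    (P : Measure Ω) [IsFiniteMeasure P] {d : ℕ}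
    {w : Ω → EuclideanSpace ℝ (Fin d)} (hw : Integrable w P) (i : Fin d) :
    P[fun ω => w ω i|m] =ᵐ[P] fun ω => (P[w|m]) ω i := by
  have hproj : ∀ (v : EuclideanSpace ℝ (Fin d)), (EuclideanSpace.proj (𝕜 := ℝ) i) v = v i :=
    fun _ => rfl
  refine (ae_eq_condExp_of_forall_setIntegral_eq hm
    ((EuclideanSpace.proj (𝕜 := ℝ) i).integrable_comp hw) ?_ ?_ ?_).symm
  · exact fun s _ _ =>
      ((EuclideanSpace.proj (𝕜 := ℝ) i).integrable_comp integrable_condExp).integrableOn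
  · intro s hs hμs
    have h1 : ∫ ω in s, (P[w|m]) ω i ∂P
        = (EuclideanSpace.proj (𝕜 := ℝ) i) (∫ ω in s, (P[w|m]) ω ∂P) :=
      (EuclideanSpace.proj (𝕜 := ℝ) i).integral_comp_comm integrable_condExp.integrableOn
    have h2 : ∫ ω in s, w ω i ∂P = (EuclideanSpace.proj (𝕜 := ℝ) i) (∫ ω in s, w ω ∂P) :=
      (EuclideanSpace.proj (𝕜 := ℝ) i).integral_comp_comm hw.integrableOn
    simp only [hproj] at h1 h2 ⊢
    rw [h1, setIntegral_condExp hm hw hs, ← h2]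
  · exact ((EuclideanSpace.proj (𝕜 := ℝ) i).continuous.comp_stronglyMeasurable
      stronglyMeasurable_condExp : StronglyMeasurable[m] _).aestronglyMeasurable

lemma super_bound {d : ℕ} {Ω : Type*} {m0 : MeasurableSpace Ω}
    (P : Measure Ω) [IsProbabilityMeasure P] (𝔉 : MeasureTheory.Filtration ℕ m0)
    (r G₁ : ℝ) (hr : 0 < r) (hG₁ : 0 < G₁) (T : ℕ)
    (x g : ℕ → Ω → EuclideanSpace ℝ (Fin d))
    (xfix : EuclideanSpace ℝ (Fin d)) (hxfix : ‖xfix‖ ≤ r)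
    (hxB : ∀ t ω, ‖x t ω‖ ≤ r)
    (hxmeas : ∀ t, 1 ≤ t → t ≤ T → StronglyMeasurable[𝔉 (t - 1)] (x t))
    (hgmeas : ∀ t, 1 ≤ t → t ≤ T → StronglyMeasurable[𝔉 t] (g t))
    (hgint : ∀ t, 1 ≤ t → t ≤ T → Integrable (g t) P)
    (hgbdd : ∀ t, 1 ≤ t → t ≤ T → ∀ᵐ ω ∂P, ‖g t ω‖ ≤ G₁)
    (hγbdd : ∀ t, 1 ≤ t → t ≤ T → ∀ᵐ ω ∂P, ‖(P[g t|𝔉 (t - 1)]) ω‖ ≤ G₁)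
    (l : ℝ) (hl : 0 ≤ l) (k : ℕ) (hk : k ≤ T) :
    Integrable (fun ω => Real.exp (l * (∑ t ∈ Finset.Icc 1 k,
        (inner ℝ (xfix - x t ω) (g t ω - (P[g t|𝔉 (t - 1)]) ω) : ℝ))
      - l ^ 2 / 2 * ∑ t ∈ Finset.Icc 1 k, (2 * G₁ * ‖xfix - x t ω‖) ^ 2)) P ∧
    ∫ ω, Real.exp (l * (∑ t ∈ Finset.Icc 1 k,
        (inner ℝ (xfix - x t ω) (g t ω - (P[g t|𝔉 (t - 1)]) ω) : ℝ))
      - l ^ 2 / 2 * ∑ t ∈ Finset.Icc 1 k, (2 * G₁ * ‖xfix - x t ω‖) ^ 2) ∂P ≤ 1 := by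
  set W : ℕ → Ω → ℝ :=
    fun t ω => (inner ℝ (xfix - x t ω) (g t ω - (P[g t|𝔉 (t - 1)]) ω) : ℝ) with hWdef
  set cc : ℕ → Ω → ℝ := fun t ω => 2 * G₁ * ‖xfix - x t ω‖ with hccdef
  set M : ℝ := 2 * G₁ * (2 * r) with hMdef
  have hM0 : 0 ≤ M := by positivity
  have hu_meas : ∀ t, 1 ≤ t → t ≤ T →
      StronglyMeasurable[𝔉 (t - 1)] (fun ω => xfix - x t ω) :=
    fun t h1 h2 => stronglyMeasurable_const.sub (hxmeas t h1 h2)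
  have hu_bdd : ∀ t ω, ‖xfix - x t ω‖ ≤ 2 * r := fun t ω =>
    (norm_sub_le _ _).trans (by linarith [hxB t ω])
  have hcc_meas : ∀ t, 1 ≤ t → t ≤ T → StronglyMeasurable[𝔉 (t - 1)] (cc t) :=
    fun t h1 h2 => ((hu_meas t h1 h2).norm.const_mul (2 * G₁))
  have hcc_nonneg : ∀ t ω, 0 ≤ cc t ω := fun t ω => by positivity
  have hcc_le : ∀ t ω, cc t ω ≤ M := fun t ω => by
    have := hu_bdd t ω
    simp only [hccdef, hMdef]
    nlinarith
  have hW_meas : ∀ t, 1 ≤ t → t ≤ T → StronglyMeasurable[𝔉 t] (W t) := fun t h1 h2 =>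
    StronglyMeasurable.inner ((hu_meas t h1 h2).mono (𝔉.mono (Nat.sub_le t 1)))
      ((hgmeas t h1 h2).sub (stronglyMeasurable_condExp.mono (𝔉.mono (Nat.sub_le t 1))))
  have hW_bdd : ∀ t, 1 ≤ t → t ≤ T → ∀ᵐ ω ∂P, |W t ω| ≤ cc t ω := by
    intro t h1 h2
    filter_upwards [hgbdd t h1 h2, hγbdd t h1 h2] with ω h3 h4
    calc |W t ω| ≤ ‖xfix - x t ω‖ * ‖g t ω - (P[g t|𝔉 (t - 1)]) ω‖ :=
          abs_real_inner_le_norm _ _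
      _ ≤ ‖xfix - x t ω‖ * (2 * G₁) := by
          refine mul_le_mul_of_nonneg_left ((norm_sub_le _ _).trans (by linarith))
            (norm_nonneg _)
      _ = cc t ω := by simp only [hccdef]; ring
  have hW_int : ∀ t, 1 ≤ t → t ≤ T → Integrable (W t) P := by
    intro t h1 h2
    refine (integrable_const M).mono'
      (((hW_meas t h1 h2).mono (𝔉.le t)).aestronglyMeasurable) ?_
    filter_upwards [hW_bdd t h1 h2] with ω h
    exact (Real.norm_eq_abs _ ▸ h).trans (hcc_le t ω)
  -- conditional expectation of W is zero
  have hW0 : ∀ t, 1 ≤ t → t ≤ T → P[W t|𝔉 (t - 1)] =ᵐ[P] 0 := by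
    intro t h1 h2
    have hmle : 𝔉 (t - 1) ≤ m0 := 𝔉.le (t - 1)
    set u : Ω → EuclideanSpace ℝ (Fin d) := fun ω => xfix - x t ω with hudef
    set γ : Ω → EuclideanSpace ℝ (Fin d) := P[g t|𝔉 (t - 1)] with hγdef
    have hB_meas : StronglyMeasurable[𝔉 (t - 1)] (fun ω => (inner ℝ (u ω) (γ ω) : ℝ)) :=
      (hu_meas t h1 h2).inner stronglyMeasurable_condExp
    have hB_int : Integrable (fun ω => (inner ℝ (u ω) (γ ω) : ℝ)) P := by
      refine (integrable_const (2 * r * G₁)).mono'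
        ((hB_meas.mono hmle).aestronglyMeasurable) ?_
      filter_upwards [hγbdd t h1 h2] with ω h4
      rw [Real.norm_eq_abs]
      calc |(inner ℝ (u ω) (γ ω) : ℝ)| ≤ ‖u ω‖ * ‖γ ω‖ := abs_real_inner_le_norm _ _
        _ ≤ 2 * r * G₁ := mul_le_mul (hu_bdd t ω) h4 (norm_nonneg _) (by positivity)
    have hA_int : Integrable (fun ω => (inner ℝ (u ω) (g t ω) : ℝ)) P := by
      refine (integrable_const (2 * r * G₁)).mono'
        ((((hu_meas t h1 h2).mono hmle).inner ((hgmeas t h1 h2).mono (𝔉.le t))).aestronglyMeasurable) ?_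
      filter_upwards [hgbdd t h1 h2] with ω h3
      rw [Real.norm_eq_abs]
      calc |(inner ℝ (u ω) (g t ω) : ℝ)| ≤ ‖u ω‖ * ‖g t ω‖ := abs_real_inner_le_norm _ _
        _ ≤ 2 * r * G₁ := mul_le_mul (hu_bdd t ω) h3 (norm_nonneg _) (by positivity)
    have hinner_sum : ∀ (a b : EuclideanSpace ℝ (Fin d)),
        (inner ℝ a b : ℝ) = ∑ i : Fin d, a i * b i := by
      intro a b
      simp [PiLp.inner_apply, RCLike.inner_apply, conj_trivial, mul_comm]
    have hAcond : P[(fun ω => (inner ℝ (u ω) (g t ω) : ℝ))|𝔉 (t - 1)]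
        =ᵐ[P] fun ω => (inner ℝ (u ω) (γ ω) : ℝ) := by
      have hsum : (fun ω => (inner ℝ (u ω) (g t ω) : ℝ))
          = ∑ i : Fin d, fun ω => u ω i * g t ω i := by
        funext ω
        rw [hinner_sum, Finset.sum_apply]
      have hint : ∀ i ∈ Finset.univ (α := Fin d),
          Integrable (fun ω => u ω i * g t ω i) P := by
        intro i _
        refine (integrable_const (2 * r * G₁)).mono' ?_ ?_
        · exact ((((EuclideanSpace.proj (𝕜 := ℝ) i).continuous.comp_stronglyMeasurable
            ((hu_meas t h1 h2).mono hmle)).mul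
            ((EuclideanSpace.proj (𝕜 := ℝ) i).continuous.comp_stronglyMeasurable
            ((hgmeas t h1 h2).mono (𝔉.le t))))).aestronglyMeasurable
        · filter_upwards [hgbdd t h1 h2] with ω h3
          rw [Real.norm_eq_abs, abs_mul]
          refine mul_le_mul ((coord_abs_le _ i).trans (hu_bdd t ω))
            ((coord_abs_le _ i).trans h3) (abs_nonneg _) (by positivity)
      rw [hsum]
      refine (condExp_finset_sum hint _).trans ?_
      have hterm : ∀ i : Fin d, P[(fun ω => u ω i * g t ω i)|𝔉 (t - 1)]
          =ᵐ[P] fun ω => u ω i * γ ω i := by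
        intro i
        have h5 : P[(fun ω => u ω i * g t ω i)|𝔉 (t - 1)]
            =ᵐ[P] (fun ω => u ω i) * P[(fun ω => g t ω i)|𝔉 (t - 1)] := by
          refine condExp_stronglyMeasurable_mul_of_bound hmle
            ((EuclideanSpace.proj (𝕜 := ℝ) i).continuous.comp_stronglyMeasurable
              (hu_meas t h1 h2))
            ((EuclideanSpace.proj (𝕜 := ℝ) i).integrable_comp (hgint t h1 h2)) (2 * r) ?_
          exact Eventually.of_forall fun ω =>
            (Real.norm_eq_abs _ ▸ (coord_abs_le (u ω) i)).trans (hu_bdd t ω)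
        refine h5.trans ?_
        have h6 := condexp_euclidean_apply hmle P (hgint t h1 h2) i
        filter_upwards [h6] with ω h7
        simp only [Pi.mul_apply]
        rw [h7]
      have hae : ∀ᵐ ω ∂P, ∀ i : Fin d,
          (P[(fun ω' => u ω' i * g t ω' i)|𝔉 (t - 1)]) ω = u ω i * γ ω i :=
        ae_all_iff.mpr fun i => hterm i
      filter_upwards [hae] with ω h8
      rw [Finset.sum_apply, hinner_sum]
      exact Finset.sum_congr rfl fun i _ => h8 i
    have hWAB : W t = (fun ω => (inner ℝ (u ω) (g t ω) : ℝ))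
        - fun ω => (inner ℝ (u ω) (γ ω) : ℝ) := by
      funext ω
      simp only [hWdef, Pi.sub_apply]
      rw [← inner_sub_right]
    calc P[W t|𝔉 (t - 1)]
        =ᵐ[P] P[(fun ω => (inner ℝ (u ω) (g t ω) : ℝ))|𝔉 (t - 1)]
          - P[(fun ω => (inner ℝ (u ω) (γ ω) : ℝ))|𝔉 (t - 1)] := by
          rw [hWAB]; exact condExp_sub hA_int hB_int _
      _ =ᵐ[P] (fun ω => (inner ℝ (u ω) (γ ω) : ℝ)) - fun ω => (inner ℝ (u ω) (γ ω) : ℝ) := by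
          rw [condExp_of_stronglyMeasurable hmle hB_meas hB_int]
          exact hAcond.sub EventuallyEq.rfl
      _ = 0 := sub_self _
  -- conditional Hoeffding step
  have hexpW_int : ∀ t, 1 ≤ t → t ≤ T →
      Integrable (fun ω => Real.exp (l * W t ω)) P := by
    intro t h1 h2
    refine (integrable_const (Real.exp (l * M))).mono'
      ((Real.continuous_exp.comp_stronglyMeasurable
        (((hW_meas t h1 h2).mono (𝔉.le t)).const_mul l)).aestronglyMeasurable) ?_
    filter_upwards [hW_bdd t h1 h2] with ω h
    rw [Real.norm_eq_abs, abs_of_pos (Real.exp_pos _)]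
    refine Real.exp_le_exp.mpr (mul_le_mul_of_nonneg_left ?_ hl)
    exact (le_abs_self _).trans (h.trans (hcc_le t ω))
  have hstep : ∀ t, 1 ≤ t → t ≤ T →
      P[(fun ω => Real.exp (l * W t ω))|𝔉 (t - 1)] ≤ᵐ[P]
        fun ω => Real.exp (l ^ 2 / 2 * (cc t ω) ^ 2) := by
    intro t h1 h2
    set s' : Ω → ℝ :=
      fun ω => if cc t ω = 0 then 0 else Real.sinh (l * cc t ω) / cc t ω with hs'def
    have hφ : Measurable (fun a : ℝ => if a = 0 then 0 else Real.sinh (l * a) / a) := by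
      refine Measurable.ite (measurableSet_eq) measurable_const ?_
      exact (Real.continuous_sinh.measurable.comp (measurable_const_mul l)).div measurable_id
    have hs'_meas : StronglyMeasurable[𝔉 (t - 1)] s' :=
      (hφ.comp (hcc_meas t h1 h2).measurable).stronglyMeasurable
    have hprod_bdd : ∀ᵐ ω ∂P, ‖s' ω * W t ω‖ ≤ Real.sinh (l * M) := by
      filter_upwards [hW_bdd t h1 h2] with ω hw
      have hsMnn : 0 ≤ Real.sinh (l * M) := Real.sinh_nonneg_iff.mpr (by positivity)
      by_cases h0 : cc t ω = 0
      · simp [hs'def, h0, hsMnn]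
      · have hccpos : 0 < cc t ω := lt_of_le_of_ne (hcc_nonneg t ω) (Ne.symm h0)
        have hsnn : 0 ≤ Real.sinh (l * cc t ω) :=
          Real.sinh_nonneg_iff.mpr (by positivity)
        rw [Real.norm_eq_abs, abs_mul, hs'def]
        simp only [if_neg h0]
        rw [abs_div, abs_of_nonneg hsnn, abs_of_pos hccpos]
        calc Real.sinh (l * cc t ω) / cc t ω * |W t ω|
            ≤ Real.sinh (l * cc t ω) / cc t ω * cc t ω :=
              mul_le_mul_of_nonneg_left hw (div_nonneg hsnn hccpos.le)
          _ = Real.sinh (l * cc t ω) := div_mul_cancel₀ _ h0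
          _ ≤ Real.sinh (l * M) := Real.sinh_le_sinh.mpr
              (mul_le_mul_of_nonneg_left (hcc_le t ω) hl)
    have hs'W_int : Integrable (fun ω => s' ω * W t ω) P := by
      refine (integrable_const (Real.sinh (l * M))).mono' ?_ hprod_bdd
      exact ((hs'_meas.mono (𝔉.le (t - 1))).mul
        ((hW_meas t h1 h2).mono (𝔉.le t))).aestronglyMeasurable
    have hcosh_meas : StronglyMeasurable[𝔉 (t - 1)] (fun ω => Real.cosh (l * cc t ω)) :=
      Real.continuous_cosh.comp_stronglyMeasurable ((hcc_meas t h1 h2).const_mul l)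
    have hcosh_int : Integrable (fun ω => Real.cosh (l * cc t ω)) P := by
      refine (integrable_const (Real.cosh (l * M))).mono'
        ((hcosh_meas.mono (𝔉.le (t - 1))).aestronglyMeasurable)
        (Eventually.of_forall fun ω => ?_)
      rw [Real.norm_eq_abs, abs_of_pos (Real.cosh_pos _)]
      refine Real.cosh_le_cosh.mpr ?_
      rw [abs_of_nonneg (by positivity : (0:ℝ) ≤ l * cc t ω),
        abs_of_nonneg (by positivity : (0:ℝ) ≤ l * M)]
      exact mul_le_mul_of_nonneg_left (hcc_le t ω) hl
    have hchord : (fun ω => Real.exp (l * W t ω)) ≤ᵐ[P]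
        fun ω => Real.cosh (l * cc t ω) + s' ω * W t ω := by
      filter_upwards [hW_bdd t h1 h2] with ω h
      exact chord_bound (hcc_nonneg t ω) h
    calc P[(fun ω => Real.exp (l * W t ω))|𝔉 (t - 1)]
        ≤ᵐ[P] P[(fun ω => Real.cosh (l * cc t ω) + s' ω * W t ω)|𝔉 (t - 1)] :=
          condExp_mono (hexpW_int t h1 h2) (hcosh_int.add hs'W_int) hchord
      _ =ᵐ[P] P[(fun ω => Real.cosh (l * cc t ω))|𝔉 (t - 1)]
            + P[(fun ω => s' ω * W t ω)|𝔉 (t - 1)] := condExp_add hcosh_int hs'W_int _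
      _ =ᵐ[P] (fun ω => Real.cosh (l * cc t ω)) + s' * P[W t|𝔉 (t - 1)] := by
          rw [condExp_of_stronglyMeasurable (𝔉.le (t - 1)) hcosh_meas hcosh_int]
          exact EventuallyEq.rfl.add
            (condExp_mul_of_stronglyMeasurable_left hs'_meas hs'W_int (hW_int t h1 h2))
      _ =ᵐ[P] fun ω => Real.cosh (l * cc t ω) := by
          filter_upwards [hW0 t h1 h2] with ω h9
          simp only [Pi.add_apply, Pi.mul_apply, h9, Pi.zero_apply, mul_zero, add_zero]
      _ ≤ᵐ[P] fun ω => Real.exp (l ^ 2 / 2 * (cc t ω) ^ 2) := by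
          refine Eventually.of_forall fun ω => ?_
          have := Real.cosh_le_exp_half_sq (l * cc t ω)
          convert this using 2
          ring
  -- the supermartingale induction
  set SQ : ℕ → Ω → ℝ := fun k ω => l * (∑ t ∈ Finset.Icc 1 k, W t ω)
    - l ^ 2 / 2 * ∑ t ∈ Finset.Icc 1 k, (cc t ω) ^ 2 with hSQdef
  have hSQ_meas : ∀ k, k ≤ T → StronglyMeasurable[𝔉 k] (SQ k) := by
    intro k hkT
    refine StronglyMeasurable.sub ?_ ?_
    · refine StronglyMeasurable.const_mul ?_ l
      refine Finset.stronglyMeasurable_fun_sum _ fun t ht => ?_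
      rw [Finset.mem_Icc] at ht
      exact (hW_meas t ht.1 (ht.2.trans hkT)).mono (𝔉.mono ht.2)
    · refine StronglyMeasurable.const_mul ?_ _
      refine Finset.stronglyMeasurable_fun_sum _ fun t ht => ?_
      rw [Finset.mem_Icc] at ht
      exact ((hcc_meas t ht.1 (ht.2.trans hkT)).mono
        (𝔉.mono ((Nat.sub_le t 1).trans ht.2))).pow 2
  have hWae : ∀ᵐ ω ∂P, ∀ t ∈ Finset.Icc 1 T, |W t ω| ≤ cc t ω := by
    refine ae_all_iff.mpr fun t => ?_
    by_cases ht : t ∈ Finset.Icc 1 T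
    · rw [Finset.mem_Icc] at ht
      filter_upwards [hW_bdd t ht.1 ht.2] with ω h _
      exact h
    · filter_upwards with ω h
      exact absurd h ht
  have hSQ_bdd : ∀ k, k ≤ T →
      ∀ᵐ ω ∂P, ‖Real.exp (SQ k ω)‖ ≤ Real.exp (l * (M * k)) := by
    intro k hkT
    filter_upwards [hWae] with ω hw
    rw [Real.norm_eq_abs, abs_of_pos (Real.exp_pos _), Real.exp_le_exp]
    have h1 : ∑ t ∈ Finset.Icc 1 k, W t ω ≤ M * k := by
      calc ∑ t ∈ Finset.Icc 1 k, W t ω ≤ ∑ t ∈ Finset.Icc 1 k, M := by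
            refine Finset.sum_le_sum fun t ht => ?_
            have ht' : t ∈ Finset.Icc 1 T := by
              rw [Finset.mem_Icc] at ht ⊢; omega
            exact (le_abs_self _).trans ((hw t ht').trans (hcc_le t ω))
        _ = M * k := by
            rw [Finset.sum_const, Nat.card_Icc]
            simp [nsmul_eq_mul, mul_comm]
    have h2 : 0 ≤ l ^ 2 / 2 * ∑ t ∈ Finset.Icc 1 k, (cc t ω) ^ 2 := by
      refine mul_nonneg (by positivity) (Finset.sum_nonneg fun t _ => sq_nonneg _)
    have := mul_le_mul_of_nonneg_left h1 hl
    simp only [hSQdef]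
    linarith
  have hX_int : ∀ k, k ≤ T → Integrable (fun ω => Real.exp (SQ k ω)) P := by
    intro k hkT
    exact (integrable_const (Real.exp (l * (M * k)))).mono'
      ((Real.continuous_exp.comp_stronglyMeasurable
        ((hSQ_meas k hkT).mono (𝔉.le k))).aestronglyMeasurable) (hSQ_bdd k hkT)
  have key : ∀ k, k ≤ T → ∫ ω, Real.exp (SQ k ω) ∂P ≤ 1 := by
    intro k
    induction k with
    | zero =>
      intro _
      have h0 : (fun ω => Real.exp (SQ 0 ω)) = fun _ => (1:ℝ) := by
        funext ω
        simp [hSQdef]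
      rw [h0]
      simp
    | succ n ih =>
      intro hn1
      have hnT : n ≤ T := Nat.le_of_succ_le hn1
      have h1 : 1 ≤ n + 1 := Nat.succ_le_succ (Nat.zero_le n)
      set h : Ω → ℝ := fun ω => SQ n ω - l ^ 2 / 2 * (cc (n + 1) ω) ^ 2 with hhdef
      have hcc1 : StronglyMeasurable[𝔉 n] (cc (n + 1)) := hcc_meas (n + 1) h1 hn1
      have hh_meas : StronglyMeasurable[𝔉 n] h :=
        (hSQ_meas n hnT).sub ((hcc1.pow 2).const_mul _)
      have hexph_meas : StronglyMeasurable[𝔉 n] (fun ω => Real.exp (h ω)) :=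
        Real.continuous_exp.comp_stronglyMeasurable hh_meas
      have hexph_bdd : ∀ᵐ ω ∂P, ‖Real.exp (h ω)‖ ≤ Real.exp (l * (M * n)) := by
        filter_upwards [hSQ_bdd n hnT] with ω hb
        rw [Real.norm_eq_abs, abs_of_pos (Real.exp_pos _)]
        rw [Real.norm_eq_abs, abs_of_pos (Real.exp_pos _), Real.exp_le_exp] at hb
        refine Real.exp_le_exp.mpr (le_trans ?_ hb)
        simp only [hhdef]
        nlinarith [sq_nonneg (cc (n + 1) ω), sq_nonneg l]
      have hdec : (fun ω => Real.exp (SQ (n + 1) ω))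
          = fun ω => Real.exp (h ω) * Real.exp (l * W (n + 1) ω) := by
        funext ω
        rw [← Real.exp_add]
        congr 1
        simp only [hSQdef, hhdef]
        rw [Finset.sum_Icc_succ_top h1, Finset.sum_Icc_succ_top h1]
        ring
      have hcond1 : P[(fun ω => Real.exp (h ω) * Real.exp (l * W (n + 1) ω))|𝔉 n]
          =ᵐ[P] (fun ω => Real.exp (h ω)) * P[(fun ω => Real.exp (l * W (n + 1) ω))|𝔉 n] :=
        condExp_stronglyMeasurable_mul_of_bound (𝔉.le n) hexph_meas
          (hexpW_int (n + 1) h1 hn1) _ hexph_bdd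
      have hle2 : P[(fun ω => Real.exp (SQ (n + 1) ω))|𝔉 n] ≤ᵐ[P]
          fun ω => Real.exp (SQ n ω) := by
        rw [hdec]
        refine hcond1.trans_le ?_
        have hstep' := hstep (n + 1) h1 hn1
        filter_upwards [hstep'] with ω hs
        simp only [Pi.mul_apply]
        calc Real.exp (h ω) * (P[(fun ω => Real.exp (l * W (n + 1) ω))|𝔉 n]) ω
            ≤ Real.exp (h ω) * Real.exp (l ^ 2 / 2 * (cc (n + 1) ω) ^ 2) :=
              mul_le_mul_of_nonneg_left hs (Real.exp_pos _).le
          _ = Real.exp (SQ n ω) := by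
              rw [← Real.exp_add]
              congr 1
              simp only [hhdef]
              ring
      calc ∫ ω, Real.exp (SQ (n + 1) ω) ∂P
          = ∫ ω, (P[(fun ω' => Real.exp (SQ (n + 1) ω'))|𝔉 n]) ω ∂P :=
            (integral_condExp (𝔉.le n)).symm
        _ ≤ ∫ ω, Real.exp (SQ n ω) ∂P :=
            integral_mono_ae integrable_condExp (hX_int n hnT) hle2
        _ ≤ 1 := ih hnT
  exact ⟨hX_int k hk, key k hk⟩

lemma markov_peel {d : ℕ} {Ω : Type*} {m0 : MeasurableSpace Ω}
    (P : Measure Ω) [IsProbabilityMeasure P] (𝔉 : MeasureTheory.Filtration ℕ m0)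
    (r G₁ : ℝ) (hr : 0 < r) (hG₁ : 0 < G₁) (T : ℕ)
    (x g : ℕ → Ω → EuclideanSpace ℝ (Fin d))
    (xfix : EuclideanSpace ℝ (Fin d)) (hxfix : ‖xfix‖ ≤ r)
    (hxB : ∀ t ω, ‖x t ω‖ ≤ r)
    (hxmeas : ∀ t, 1 ≤ t → t ≤ T → StronglyMeasurable[𝔉 (t - 1)] (x t))
    (hgmeas : ∀ t, 1 ≤ t → t ≤ T → StronglyMeasurable[𝔉 t] (g t))
    (hgint : ∀ t, 1 ≤ t → t ≤ T → Integrable (g t) P)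
    (hgbdd : ∀ t, 1 ≤ t → t ≤ T → ∀ᵐ ω ∂P, ‖g t ω‖ ≤ G₁)
    (hγbdd : ∀ t, 1 ≤ t → t ≤ T → ∀ᵐ ω ∂P, ‖(P[g t|𝔉 (t - 1)]) ω‖ ≤ G₁)
    (l : ℝ) (hl : 0 ≤ l) (L : ℝ) :
    (P {ω | Real.exp L ≤ Real.exp (l * (∑ t ∈ Finset.Icc 1 T,
        (inner ℝ (xfix - x t ω) (g t ω - (P[g t|𝔉 (t - 1)]) ω) : ℝ))
      - l ^ 2 / 2 * ∑ t ∈ Finset.Icc 1 T, (2 * G₁ * ‖xfix - x t ω‖) ^ 2)}).toReal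
      ≤ Real.exp (-L) := by
  obtain ⟨hint, hle⟩ := super_bound P 𝔉 r G₁ hr hG₁ T x g xfix hxfix hxB hxmeas hgmeas
    hgint hgbdd hγbdd l hl T le_rfl
  have hmm := mul_meas_ge_le_integral_of_nonneg
    (Eventually.of_forall fun ω => (Real.exp_pos _).le) hint (Real.exp L)
  have h2 := hmm.trans hle
  rw [Real.exp_neg]
  rw [← le_div_iff₀' (Real.exp_pos L)] at h2
  rw [one_div] at h2
  exact h2

/-- for a fixed `x` in the ball `B = {x : ‖x‖ ≤ r}` and iterates `x_t ∈ B` with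
stochastic gradients `g̃_t` satisfying `E[g̃_t | 𝔉_{t-1}] = ∇f(x_t)` and
`‖g̃_t‖, ‖∇f(x_t)‖ ≤ G₁` a.s., with `D_T = ∑_t ‖x_t - x‖²`,
`Λ_T = ∑_t ⟨x - x_t, g̃_t - ∇f(x_t)⟩` and `m = ⌈2 log₂ T⌉`:
`ℙ(D_T ≤ 4r²/T) + ℙ(Λ_T ≤ 4G₁√(D_T ln(m/ε)) + (4√2/3)G₁ ln(m/ε)) ≥ 1 - ε`. -/
theorem stmt_6 {d : ℕ} {Ω : Type*} {m0 : MeasurableSpace Ω}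
    (P : Measure Ω) [IsProbabilityMeasure P] (𝔉 : MeasureTheory.Filtration ℕ m0)
    (r G₁ : ℝ) (hr : 0 < r) (hG₁ : 0 < G₁)
    (T : ℕ) (hT : 1 ≤ T)
    (f : EuclideanSpace ℝ (Fin d) → ℝ)
    (x g : ℕ → Ω → EuclideanSpace ℝ (Fin d))
    (xfix : EuclideanSpace ℝ (Fin d)) (hxfix : ‖xfix‖ ≤ r)
    (hxB : ∀ t ω, ‖x t ω‖ ≤ r)
    (hxmeas : ∀ t, 1 ≤ t → t ≤ T → StronglyMeasurable[𝔉 (t - 1)] (x t))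
    (hgmeas : ∀ t, 1 ≤ t → t ≤ T → StronglyMeasurable[𝔉 t] (g t))
    (hgint : ∀ t, 1 ≤ t → t ≤ T → Integrable (g t) P)
    (hcond : ∀ t, 1 ≤ t → t ≤ T →
      P[g t | 𝔉 (t - 1)] =ᵐ[P] fun ω => gradient f (x t ω))
    (hgbdd : ∀ t, 1 ≤ t → t ≤ T → ∀ᵐ ω ∂P, ‖g t ω‖ ≤ G₁)
    (hgradbdd : ∀ t, 1 ≤ t → t ≤ T → ∀ᵐ ω ∂P, ‖gradient f (x t ω)‖ ≤ G₁)
    (ε : ℝ) (hε : 0 < ε) (hε1 : ε < 1)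
    (m : ℕ) (hm : m = ⌈2 * Real.logb 2 (T : ℝ)⌉₊)
    (DT LT : Ω → ℝ)
    (hDT : ∀ ω, DT ω = ∑ t ∈ Finset.Icc 1 T, ‖x t ω - xfix‖ ^ 2)
    (hLT : ∀ ω, LT ω =
      ∑ t ∈ Finset.Icc 1 T, (inner ℝ (xfix - x t ω) (g t ω - gradient f (x t ω)) : ℝ)) :
    1 - ε ≤ (P {ω | DT ω ≤ 4 * r ^ 2 / T}).toReal +
      (P {ω | LT ω ≤ 4 * G₁ * Real.sqrt (DT ω * Real.log (m / ε)) +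
        4 * Real.sqrt 2 / 3 * G₁ * Real.log (m / ε)}).toReal := by
  have hTR : (0:ℝ) < T := by exact_mod_cast hT
  have hxd : ∀ t ω, ‖x t ω - xfix‖ ≤ 2 * r := fun t ω =>
    (norm_sub_le _ _).trans (by linarith [hxB t ω])
  have hDT0 : ∀ ω, 0 ≤ DT ω := fun ω => by
    rw [hDT]; exact Finset.sum_nonneg fun t _ => sq_nonneg _
  by_cases hT1 : T = 1
  · -- trivial case : D_T ≤ 4 r² always
    subst hT1
    have hA : {ω | DT ω ≤ 4 * r ^ 2 / (1:ℕ)} = Set.univ := by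
      ext ω
      simp only [Set.mem_setOf_eq, Set.mem_univ, iff_true, Nat.cast_one, div_one]
      rw [hDT]
      rw [Finset.Icc_self, Finset.sum_singleton]
      have h1 : ‖x 1 ω - xfix‖ ^ 2 ≤ (2 * r) ^ 2 :=
        pow_le_pow_left₀ (norm_nonneg _) (hxd 1 ω) 2
      nlinarith
    rw [hA, measure_univ]
    have := ENNReal.toReal_nonneg (a := P {ω | LT ω ≤ 4 * G₁ *
      Real.sqrt (DT ω * Real.log (m / ε)) + 4 * Real.sqrt 2 / 3 * G₁ * Real.log (m / ε)})
    simp only [ENNReal.toReal_one]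
    linarith
  · have hT2 : 2 ≤ T := by omega
    have hT2R : (2:ℝ) ≤ (T:ℝ) := by exact_mod_cast hT2
    -- m ≥ 2
    have hlogb : (1:ℝ) ≤ Real.logb 2 T := by
      rw [Real.le_logb_iff_rpow_le (by norm_num) hTR, Real.rpow_one]
      exact hT2R
    have hm2 : (2:ℝ) ≤ (m:ℝ) := by
      have h1 : (2:ℝ) ≤ 2 * Real.logb 2 T := by linarith
      have h2 := Nat.le_ceil (2 * Real.logb 2 (T:ℝ))
      rw [← hm] at h2
      linarith
    have hmR : (0:ℝ) < (m:ℝ) := by linarith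
    set L : ℝ := Real.log ((m:ℝ) / ε) with hLdef
    have hmε : (0:ℝ) < (m:ℝ) / ε := by positivity
    have hLpos : 0 < L := Real.log_pos (by rw [lt_div_iff₀ hε]; linarith)
    have hexpL : Real.exp (-L) = ε / m := by
      rw [Real.exp_neg, Real.exp_log hmε, inv_div]
    -- 2^m ≥ T²
    have hpow : (T:ℝ) ^ 2 ≤ (2:ℝ) ^ m := by
      have h1 : (T:ℝ) = (2:ℝ) ^ (Real.logb 2 T) :=
        (Real.rpow_logb (by norm_num) (by norm_num) hTR).symm
      have h2 : (T:ℝ) ^ 2 = (2:ℝ) ^ (2 * Real.logb 2 (T:ℝ)) := by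
        rw [mul_comm, Real.rpow_mul (by norm_num : (0:ℝ) ≤ 2), ← h1,
          show ((2:ℝ)) = ((2:ℕ):ℝ) by norm_num, Real.rpow_natCast]
      have h3 : (2:ℝ) ^ (2 * Real.logb 2 T) ≤ (2:ℝ) ^ ((m:ℕ):ℝ) := by
        refine Real.rpow_le_rpow_of_exponent_le (by norm_num) ?_
        rw [hm]; exact Nat.le_ceil _
      rw [h2]
      calc (2:ℝ) ^ (2 * Real.logb 2 T) ≤ (2:ℝ) ^ ((m:ℕ):ℝ) := h3
        _ = (2:ℝ) ^ m := Real.rpow_natCast 2 m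
    -- conditional expectations bounded
    have hγbdd : ∀ t, 1 ≤ t → t ≤ T → ∀ᵐ ω ∂P, ‖(P[g t|𝔉 (t - 1)]) ω‖ ≤ G₁ := by
      intro t h1 h2
      filter_upwards [hcond t h1 h2, hgradbdd t h1 h2] with ω hc hg
      rw [hc]; exact hg
    -- peeling parameters
    set q : ℕ → ℝ := fun j => 16 * G₁ ^ 2 * r ^ 2 * 2 ^ j / T with hqdef
    have hq : ∀ j, 0 < q j := fun j => div_pos (by positivity) hTR
    set lam : ℕ → ℝ := fun j => Real.sqrt (2 * L / q j) with hlamdef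
    have hlam0 : ∀ j, 0 ≤ lam j := fun j => Real.sqrt_nonneg _
    have hlamsq : ∀ j, lam j ^ 2 = 2 * L / q j := fun j =>
      Real.sq_sqrt (div_nonneg (by linarith) (hq j).le)
    -- the peeling events
    set Gs : ℕ → Set Ω := fun j => {ω | Real.exp L ≤ Real.exp (lam j * (∑ t ∈ Finset.Icc 1 T,
        (inner ℝ (xfix - x t ω) (g t ω - (P[g t|𝔉 (t - 1)]) ω) : ℝ))
      - lam j ^ 2 / 2 * ∑ t ∈ Finset.Icc 1 T, (2 * G₁ * ‖xfix - x t ω‖) ^ 2)} with hGsdef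
    have hMark : ∀ j, (P (Gs j)).toReal ≤ ε / m := by
      intro j
      have h1 := markov_peel P 𝔉 r G₁ hr hG₁ T x g xfix hxfix hxB hxmeas hgmeas
        hgint hgbdd hγbdd (lam j) (hlam0 j) L
      rw [hexpL] at h1
      exact h1
    -- a.e. identification of LT and Q
    have hLS : ∀ᵐ ω ∂P, LT ω = ∑ t ∈ Finset.Icc 1 T,
        (inner ℝ (xfix - x t ω) (g t ω - (P[g t|𝔉 (t - 1)]) ω) : ℝ) := by
      have hae : ∀ᵐ ω ∂P, ∀ t, t ∈ Finset.Icc 1 T →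
          (P[g t|𝔉 (t - 1)]) ω = gradient f (x t ω) := by
        refine ae_all_iff.mpr fun t => ?_
        by_cases ht : t ∈ Finset.Icc 1 T
        · rw [Finset.mem_Icc] at ht
          filter_upwards [hcond t ht.1 ht.2] with ω h _
          exact h
        · filter_upwards with ω h
          exact absurd h ht
      filter_upwards [hae] with ω h
      rw [hLT]
      refine Finset.sum_congr rfl fun t ht => ?_
      rw [h t ht]
    have hQD : ∀ ω, (∑ t ∈ Finset.Icc 1 T, (2 * G₁ * ‖xfix - x t ω‖) ^ 2)
        = 4 * G₁ ^ 2 * DT ω := by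
      intro ω
      rw [hDT, Finset.mul_sum]
      refine Finset.sum_congr rfl fun t _ => ?_
      rw [norm_sub_rev]
      ring
    have hDTb : ∀ ω, DT ω ≤ 4 * r ^ 2 * T := by
      intro ω
      rw [hDT]
      calc ∑ t ∈ Finset.Icc 1 T, ‖x t ω - xfix‖ ^ 2
          ≤ ∑ t ∈ Finset.Icc 1 T, (2 * r) ^ 2 :=
            Finset.sum_le_sum fun t _ => pow_le_pow_left₀ (norm_nonneg _) (hxd t ω) 2
        _ = 4 * r ^ 2 * T := by
            rw [Finset.sum_const, Nat.card_Icc, nsmul_eq_mul]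
            push_cast
            ring
    -- the bad event is a.e. included in the union of peeling events
    set N : Set Ω := {ω | ¬ DT ω ≤ 4 * r ^ 2 / T} ∩ {ω | ¬ LT ω ≤ 4 * G₁ *
      Real.sqrt (DT ω * Real.log (m / ε)) + 4 * Real.sqrt 2 / 3 * G₁ *
      Real.log (m / ε)} with hNdef
    have hsub : N ≤ᵐ[P] ⋃ j ∈ Finset.Icc 1 m, Gs j := by
      filter_upwards [hLS] with ω hω
      intro hmem
      obtain ⟨hD', hL'⟩ := hmem
      have hDgt : 4 * r ^ 2 / T < DT ω := lt_of_not_ge hD'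
      have hLgt : 4 * G₁ * Real.sqrt (DT ω * L) + 4 * Real.sqrt 2 / 3 * G₁ * L < LT ω :=
        lt_of_not_ge hL'
      have hJex : ∃ j, DT ω ≤ 4 * r ^ 2 * 2 ^ j / T := by
        refine ⟨m, (hDTb ω).trans ?_⟩
        rw [le_div_iff₀ hTR]
        nlinarith [hpow, sq_nonneg r]
      set j := Nat.find hJex with hjdef
      have hjle : DT ω ≤ 4 * r ^ 2 * 2 ^ j / T := Nat.find_spec hJex
      have hjm : j ≤ m := Nat.find_min' hJex (by
        refine (hDTb ω).trans ?_
        rw [le_div_iff₀ hTR]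
        nlinarith [hpow, sq_nonneg r])
      have hj1 : 1 ≤ j := by
        by_contra hc
        have hj0 : j = 0 := by omega
        have := hjle
        rw [hj0] at this
        simp only [pow_zero, mul_one] at this
        linarith
      have hjprev : ¬ DT ω ≤ 4 * r ^ 2 * 2 ^ (j - 1) / T :=
        Nat.find_min hJex (by omega)
      have hDprev : 4 * r ^ 2 * 2 ^ (j - 1) / T < DT ω := lt_of_not_ge hjprev
      -- show membership in Gs j
      refine Set.mem_biUnion (show j ∈ (Finset.Icc 1 m : Finset ℕ) from
        Finset.mem_Icc.mpr ⟨hj1, hjm⟩) ?_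
      have hQle : (∑ t ∈ Finset.Icc 1 T, (2 * G₁ * ‖xfix - x t ω‖) ^ 2) ≤ q j := by
        rw [hQD]
        have h1 : 4 * G₁ ^ 2 * DT ω ≤ 4 * G₁ ^ 2 * (4 * r ^ 2 * 2 ^ j / T) :=
          mul_le_mul_of_nonneg_left hjle (by positivity)
        refine h1.trans (le_of_eq ?_)
        simp only [hqdef]
        ring
      have h2j : (2:ℝ) ^ j = 2 * 2 ^ (j - 1) := by
        have hj' : j - 1 + 1 = j := by omega
        calc (2:ℝ) ^ j = 2 ^ (j - 1 + 1) := by rw [hj']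
          _ = 2 * 2 ^ (j - 1) := by rw [pow_succ]; ring
      have hsqrt : Real.sqrt (2 * q j * L) ≤ 4 * G₁ * Real.sqrt (DT ω * L) := by
        have h4G : 4 * G₁ * Real.sqrt (DT ω * L) = Real.sqrt (16 * G₁ ^ 2 * (DT ω * L)) := by
          rw [show 16 * G₁ ^ 2 * (DT ω * L) = (4 * G₁) ^ 2 * (DT ω * L) by ring,
            Real.sqrt_mul (sq_nonneg _), Real.sqrt_sq (by positivity)]
        rw [h4G]
        refine Real.sqrt_le_sqrt ?_
        have h5 := mul_le_mul_of_nonneg_left hDprev.le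
          (by positivity : (0:ℝ) ≤ 16 * G₁ ^ 2 * L)
        calc 2 * q j * L = 16 * G₁ ^ 2 * L * (4 * r ^ 2 * 2 ^ (j - 1) / T) := by
              simp only [hqdef]; rw [h2j]; ring
          _ ≤ 16 * G₁ ^ 2 * L * DT ω := h5
          _ = 16 * G₁ ^ 2 * (DT ω * L) := by ring
      have hS' : Real.sqrt (2 * q j * L) ≤ ∑ t ∈ Finset.Icc 1 T,
          (inner ℝ (xfix - x t ω) (g t ω - (P[g t|𝔉 (t - 1)]) ω) : ℝ) := by
        rw [← hω]
        have h2nd : 0 ≤ 4 * Real.sqrt 2 / 3 * G₁ * L := by positivity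
        linarith
      have hmul : lam j * Real.sqrt (2 * q j * L) = 2 * L := by
        rw [hlamdef]
        rw [← Real.sqrt_mul (by positivity) (2 * q j * L)]
        rw [show 2 * L / q j * (2 * q j * L) = (2 * L) ^ 2 by
          field_simp [(hq j).ne']]
        exact Real.sqrt_sq (by positivity)
      have hquad : lam j ^ 2 / 2 * (∑ t ∈ Finset.Icc 1 T, (2 * G₁ * ‖xfix - x t ω‖) ^ 2)
          ≤ L := by
        rw [hlamsq]
        have h1 : 2 * L / q j / 2 * (∑ t ∈ Finset.Icc 1 T, (2 * G₁ * ‖xfix - x t ω‖) ^ 2)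
            ≤ 2 * L / q j / 2 * q j :=
          mul_le_mul_of_nonneg_left hQle (by positivity)
        refine h1.trans (le_of_eq ?_)
        field_simp [(hq j).ne']
      have hlin : lam j * Real.sqrt (2 * q j * L) ≤ lam j * (∑ t ∈ Finset.Icc 1 T,
          (inner ℝ (xfix - x t ω) (g t ω - (P[g t|𝔉 (t - 1)]) ω) : ℝ)) :=
        mul_le_mul_of_nonneg_left hS' (hlam0 j)
      show Real.exp L ≤ _
      rw [Real.exp_le_exp]
      linarith
    -- measure of the bad event
    have hbad : (P N).toReal ≤ ε := by
      have h1 : P N ≤ ∑ j ∈ Finset.Icc 1 m, P (Gs j) :=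
        (measure_mono_ae hsub).trans (measure_biUnion_finset_le _ _)
      have h2 : (P N).toReal ≤ (∑ j ∈ Finset.Icc 1 m, P (Gs j)).toReal :=
        ENNReal.toReal_mono (by
          refine (lt_of_le_of_lt (Finset.sum_le_sum fun j _ => measure_mono
            (Set.subset_univ _)) ?_).ne
          simp only [measure_univ, Finset.sum_const, nsmul_eq_mul, mul_one]
          exact ENNReal.natCast_lt_top _) h1
      refine h2.trans ?_
      rw [ENNReal.toReal_sum fun j _ => measure_ne_top P _]
      calc ∑ j ∈ Finset.Icc 1 m, (P (Gs j)).toReal ≤ ∑ j ∈ Finset.Icc 1 m, ε / m :=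
            Finset.sum_le_sum fun j _ => hMark j
        _ = ε := by
            rw [Finset.sum_const, Nat.card_Icc, nsmul_eq_mul, Nat.add_sub_cancel]
            have hmne : (m:ℝ) ≠ 0 := ne_of_gt hmR
            field_simp
    -- final assembly
    set A : Set Ω := {ω | DT ω ≤ 4 * r ^ 2 / T} with hAdef
    set B : Set Ω := {ω | LT ω ≤ 4 * G₁ * Real.sqrt (DT ω * Real.log (m / ε)) +
      4 * Real.sqrt 2 / 3 * G₁ * Real.log (m / ε)} with hBdef
    have hcover : (Set.univ : Set Ω) ⊆ (A ∪ B) ∪ N := by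
      intro ω _
      by_cases h1 : DT ω ≤ 4 * r ^ 2 / T
      · exact Or.inl (Or.inl h1)
      · by_cases h2 : LT ω ≤ 4 * G₁ * Real.sqrt (DT ω * Real.log (m / ε)) +
          4 * Real.sqrt 2 / 3 * G₁ * Real.log (m / ε)
        · exact Or.inl (Or.inr h2)
        · exact Or.inr ⟨h1, h2⟩
    have h3 : (1:ℝ≥0∞) ≤ P (A ∪ B) + P N := by
      calc (1:ℝ≥0∞) = P Set.univ := (measure_univ).symm
        _ ≤ P ((A ∪ B) ∪ N) := measure_mono hcover
        _ ≤ P (A ∪ B) + P N := measure_union_le _ _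
    have h4 : (1:ℝ) ≤ (P (A ∪ B)).toReal + (P N).toReal := by
      have := ENNReal.toReal_mono (a := (1:ℝ≥0∞)) (b := P (A ∪ B) + P N)
        (ENNReal.add_ne_top.mpr ⟨measure_ne_top P _, measure_ne_top P _⟩) h3
      rwa [ENNReal.toReal_one, ENNReal.toReal_add (measure_ne_top P _)
        (measure_ne_top P _)] at this
    have h5 : (P (A ∪ B)).toReal ≤ (P A).toReal + (P B).toReal := by
      have := ENNReal.toReal_mono (a := P (A ∪ B)) (b := P A + P B)
        (ENNReal.add_ne_top.mpr ⟨measure_ne_top P _, measure_ne_top P _⟩)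
        (measure_union_le A B)
      rwa [ENNReal.toReal_add (measure_ne_top P _) (measure_ne_top P _)] at this
    have h6 : (P N).toReal ≤ ε := hbad
    linarith
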